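/- In the real vector space of antisymmetric maps β : Fin 7 → Fin 7 → ℝ (dimension 21), the subspace Ω²₇ = {β : β_{ab} = ∑_k X_k φ_{kab} for some X ∈ ℝ⁷} has dimension 7, the subspace Ω²₁₄ = {β : ∑_{i,j} β_{ij} φ_{ijk} = 0 for all k} has dimension 14, and the whole space is the (internal) direct sum Ω²₇ ⊕ Ω²₁₄. -/

import Mathlib

open scoped BigOperators

/-- Antisymmetrized elementary tensor on `ℝ⁷`: value `sign σ` at `v ∘ σ`, zero elsewhere. -/
noncomputable def altE {n : ℕ} (v w : Fin n → Fin 7) : ℝ :=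
  ∑ σ : Equiv.Perm (Fin n), ((Equiv.Perm.sign σ : ℤ) : ℝ) * (if w = v ∘ σ then 1 else 0)

/-- The G₂ 3-form `φ = e^{123}+e^{145}−e^{167}+e^{246}+e^{257}+e^{347}−e^{356}` (0-indexed). -/
noncomputable def phi (i j k : Fin 7) : ℝ :=
  altE ![0,1,2] ![i,j,k] + altE ![0,3,4] ![i,j,k] - altE ![0,5,6] ![i,j,k]
    + altE ![1,3,5] ![i,j,k] + altE ![1,4,6] ![i,j,k] + altE ![2,3,6] ![i,j,k]
    - altE ![2,4,5] ![i,j,k]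

/-- The dual 4-form `ψ = ∗φ = −e^{4567}−e^{2367}+e^{2345}−e^{1357}−e^{1346}−e^{1256}+e^{1247}`
(0-indexed). -/
noncomputable def psi (i j k l : Fin 7) : ℝ :=
  - altE ![3,4,5,6] ![i,j,k,l] - altE ![1,2,5,6] ![i,j,k,l] + altE ![1,2,3,4] ![i,j,k,l]
    - altE ![0,2,4,6] ![i,j,k,l] - altE ![0,2,3,5] ![i,j,k,l] - altE ![0,1,4,5] ![i,j,k,l]
    + altE ![0,1,3,6] ![i,j,k,l]

/-- Kronecker delta on `Fin 7`. -/
noncomputable def kdelta (i j : Fin 7) : ℝ := if i = j then 1 else 0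

/-- The space of antisymmetric 2-tensors on `ℝ⁷`. -/
def Alt2 : Submodule ℝ (Fin 7 → Fin 7 → ℝ) where
  carrier := {β | ∀ i j, β i j = - β j i}
  zero_mem' := by intro i j; simp
  add_mem' := by
    intro a b ha hb i j
    simp only [Pi.add_apply]
    rw [ha i j, hb i j]; ring
  smul_mem' := by
    intro c a ha i j
    simp only [Pi.smul_apply, smul_eq_mul]
    rw [ha i j]; ring

/-- The subspace `Ω²₇` of 2-tensors of the form `X ⌟ φ`. -/
noncomputable def Omega2_7 : Submodule ℝ (Fin 7 → Fin 7 → ℝ) where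
  carrier := {β | ∃ X : Fin 7 → ℝ, ∀ a b, β a b = ∑ k, X k * phi k a b}
  zero_mem' := ⟨0, by simp⟩
  add_mem' := by
    rintro a b ⟨X, hX⟩ ⟨Y, hY⟩
    refine ⟨fun k => X k + Y k, fun i j => ?_⟩
    simp only [Pi.add_apply, hX i j, hY i j, add_mul, Finset.sum_add_distrib]
  smul_mem' := by
    rintro c a ⟨X, hX⟩
    refine ⟨fun k => c * X k, fun i j => ?_⟩
    simp only [Pi.smul_apply, smul_eq_mul, hX i j, Finset.mul_sum, mul_assoc]

/-- The subspace `Ω²₁₄` of antisymmetric 2-tensors with `∑ β_{ij} φ_{ijk} = 0` for all `k`. -/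
noncomputable def Omega2_14 : Submodule ℝ (Fin 7 → Fin 7 → ℝ) where
  carrier := {β | (∀ i j, β i j = - β j i) ∧ ∀ k, ∑ i, ∑ j, β i j * phi i j k = 0}
  zero_mem' := ⟨by intro i j; simp, by intro k; simp⟩
  add_mem' := by
    rintro a b ⟨ha1, ha2⟩ ⟨hb1, hb2⟩
    refine ⟨fun i j => ?_, fun k => ?_⟩
    · simp only [Pi.add_apply]; rw [ha1 i j, hb1 i j]; ring
    · simp only [Pi.add_apply, add_mul, Finset.sum_add_distrib, ha2 k, hb2 k, add_zero]
  smul_mem' := by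
    rintro c a ⟨ha1, ha2⟩
    refine ⟨fun i j => ?_, fun k => ?_⟩
    · simp only [Pi.smul_apply, smul_eq_mul]; rw [ha1 i j]; ring
    · simp only [Pi.smul_apply, smul_eq_mul, mul_assoc, ← Finset.mul_sum, ha2 k, mul_zero]

/-! ### Auxiliary integer computations -/

def altEZ {n : ℕ} (v w : Fin n → Fin 7) : ℤ :=
  ∑ σ : Equiv.Perm (Fin n), ((Equiv.Perm.sign σ : ℤ)) * (if w = v ∘ σ then 1 else 0)

def phiZ (i j k : Fin 7) : ℤ :=
  altEZ ![0,1,2] ![i,j,k] + altEZ ![0,3,4] ![i,j,k] - altEZ ![0,5,6] ![i,j,k]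
    + altEZ ![1,3,5] ![i,j,k] + altEZ ![1,4,6] ![i,j,k] + altEZ ![2,3,6] ![i,j,k]
    - altEZ ![2,4,5] ![i,j,k]

def tripVal (a b c i j k : Fin 7) : ℤ :=
  if (i,j,k)=(a,b,c) ∨ (i,j,k)=(b,c,a) ∨ (i,j,k)=(c,a,b) then 1
  else if (i,j,k)=(a,c,b) ∨ (i,j,k)=(b,a,c) ∨ (i,j,k)=(c,b,a) then -1 else 0

def phiT (i j k : Fin 7) : ℤ :=
  tripVal 0 1 2 i j k + tripVal 0 3 4 i j k - tripVal 0 5 6 i j k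
    + tripVal 1 3 5 i j k + tripVal 1 4 6 i j k + tripVal 2 3 6 i j k
    - tripVal 2 4 5 i j k

lemma altE_eq {n : ℕ} (v w : Fin n → Fin 7) : altE v w = ((altEZ v w : ℤ) : ℝ) := by
  unfold altE altEZ; push_cast [apply_ite (fun z : ℤ => (z : ℝ))]; rfl

set_option maxRecDepth 100000 in
set_option maxHeartbeats 4000000 in
lemma phiZ_eq_phiT : ∀ i j k, phiZ i j k = phiT i j k := by decide

set_option maxRecDepth 100000 in
set_option maxHeartbeats 4000000 in
lemma phiT_anti : ∀ k a b, phiT k a b = - phiT k b a := by decide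

set_option maxRecDepth 1000000 in
set_option maxHeartbeats 8000000 in
lemma phiT_contr : ∀ k l : Fin 7, (∑ i, ∑ j, phiT k i j * phiT i j l)
    = if k = l then 6 else 0 := by decide

lemma phi_eq (i j k : Fin 7) : phi i j k = ((phiT i j k : ℤ) : ℝ) := by
  rw [← phiZ_eq_phiT]
  simp only [phi, phiZ, altE_eq]
  push_cast
  ring

lemma phi_anti (k a b : Fin 7) : phi k a b = - phi k b a := by
  rw [phi_eq, phi_eq, phiT_anti k a b]; push_cast; ring

lemma phi_contr (k l : Fin 7) :
    ∑ i, ∑ j, phi k i j * phi i j l = if k = l then (6:ℝ) else 0 := by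
  have h : ((∑ i, ∑ j, phiT k i j * phiT i j l : ℤ) : ℝ) = if k = l then (6:ℝ) else 0 := by
    rw [phiT_contr k l]; split <;> norm_num
  rw [← h]
  push_cast [phi_eq]
  rfl

/-! ### Linear maps -/

noncomputable def Tmap : (Fin 7 → ℝ) →ₗ[ℝ] (Fin 7 → Fin 7 → ℝ) where
  toFun X := fun a b => ∑ k, X k * phi k a b
  map_add' X Y := by
    funext a b
    simp [add_mul, Finset.sum_add_distrib]
  map_smul' c X := by
    funext a b
    simp [Finset.mul_sum, mul_assoc]

noncomputable def piMap : (Fin 7 → Fin 7 → ℝ) →ₗ[ℝ] (Fin 7 → ℝ) where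
  toFun β := fun k => ∑ i, ∑ j, β i j * phi i j k
  map_add' β γ := by
    funext k
    simp [add_mul, Finset.sum_add_distrib]
  map_smul' c β := by
    funext k
    simp [Finset.mul_sum, mul_assoc]

lemma pi_T (X : Fin 7 → ℝ) (l : Fin 7) : piMap (Tmap X) l = 6 * X l := by
  show (∑ i, ∑ j, (∑ k, X k * phi k i j) * phi i j l) = 6 * X l
  have h1 : (∑ i, ∑ j, (∑ k, X k * phi k i j) * phi i j l)
      = ∑ k, X k * (∑ i, ∑ j, phi k i j * phi i j l) := by
    calc (∑ i, ∑ j, (∑ k, X k * phi k i j) * phi i j l)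
        = ∑ i, ∑ k, ∑ j, X k * (phi k i j * phi i j l) := by
          simp only [Finset.sum_mul, mul_assoc]
          exact Finset.sum_congr rfl fun i _ => Finset.sum_comm
      _ = ∑ k, ∑ i, ∑ j, X k * (phi k i j * phi i j l) := Finset.sum_comm
      _ = ∑ k, X k * (∑ i, ∑ j, phi k i j * phi i j l) := by
          simp only [Finset.mul_sum]
  rw [h1]
  simp only [phi_contr, mul_ite, mul_zero]
  simp [Finset.sum_ite_eq', mul_comm]

lemma Tmap_inj : Function.Injective Tmap := by
  rw [injective_iff_map_eq_zero]
  intro X hX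
  funext l
  have h := pi_T X l
  rw [hX] at h
  simp only [map_zero, Pi.zero_apply] at h
  have : (6:ℝ) * X l = 0 := h.symm
  simpa using (mul_eq_zero.mp this).resolve_left (by norm_num)

lemma Omega2_7_eq_range : Omega2_7 = LinearMap.range Tmap := by
  ext β
  constructor
  · rintro ⟨X, hX⟩
    exact ⟨X, by funext a b; exact (hX a b).symm⟩
  · rintro ⟨X, hX⟩
    exact ⟨X, fun a b => by rw [← hX]; rfl⟩

lemma Omega2_7_le_Alt2 : Omega2_7 ≤ Alt2 := by
  rintro β ⟨X, hX⟩ a b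
  rw [hX a b, hX b a, ← Finset.sum_neg_distrib]
  exact Finset.sum_congr rfl fun k _ => by rw [phi_anti k a b]; ring

lemma Omega2_14_le_Alt2 : Omega2_14 ≤ Alt2 := fun β h => h.1

lemma finrank_Alt2 : Module.finrank ℝ Alt2 = 21 := by
  let S := {p : Fin 7 × Fin 7 // p.1 < p.2}
  let F : Alt2 →ₗ[ℝ] (S → ℝ) :=
    { toFun := fun β p => β.1 p.1.1 p.1.2
      map_add' := fun β γ => rfl
      map_smul' := fun c β => rfl }
  let G : (S → ℝ) →ₗ[ℝ] Alt2 :=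
    { toFun := fun f => ⟨fun i j =>
        if h : i < j then f ⟨(i,j), h⟩ else if h' : j < i then - f ⟨(j,i), h'⟩ else 0, by
        intro i j
        dsimp only
        rcases lt_trichotomy i j with h | h | h
        · rw [dif_pos h, dif_neg (not_lt_of_gt h), dif_pos h]; ring
        · subst h; rw [dif_neg (lt_irrefl i), dif_neg (lt_irrefl i)]; ring
        · rw [dif_neg (not_lt_of_gt h), dif_pos h, dif_pos h]⟩
      map_add' := fun f g => by
        apply Subtype.ext
        funext i j
        show _ = (_ : ℝ) + _
        by_cases h : i < j
        · simp [h]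
        · by_cases h' : j < i <;> simp [h, h'] <;> ring
      map_smul' := fun c f => by
        apply Subtype.ext
        funext i j
        show _ = c * _
        by_cases h : i < j
        · simp [h]
        · by_cases h' : j < i <;> simp [h, h'] }
  have hFG : ∀ f, F (G f) = f := by
    intro f
    funext p
    show (if h : p.1.1 < p.1.2 then f ⟨(p.1.1, p.1.2), h⟩ else _) = f p
    rw [dif_pos p.2]
  have hGF : ∀ β, G (F β) = β := by
    intro β
    apply Subtype.ext
    funext i j
    show (if h : i < j then β.1 i j else if h' : j < i then - β.1 j i else 0) = β.1 i j
    rcases lt_trichotomy i j with h | h | h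
    · rw [dif_pos h]
    · subst h
      rw [dif_neg (lt_irrefl i), dif_neg (lt_irrefl i)]
      have := β.2 i i
      linarith
    · rw [dif_neg (not_lt_of_gt h), dif_pos h, ← β.2 i j]
  let E : Alt2 ≃ₗ[ℝ] (S → ℝ) := LinearEquiv.ofLinear F G
    (by apply LinearMap.ext; intro f; exact hFG f)
    (by apply LinearMap.ext; intro β; exact hGF β)
  rw [E.finrank_eq, Module.finrank_pi]
  decide

lemma finrank_Omega2_7 : Module.finrank ℝ Omega2_7 = 7 := by
  rw [Omega2_7_eq_range, LinearMap.finrank_range_of_inj Tmap_inj, Module.finrank_pi,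
    Fintype.card_fin]

noncomputable def piA : Alt2 →ₗ[ℝ] (Fin 7 → ℝ) := piMap.comp Alt2.subtype

lemma piA_surj : Function.Surjective piA := by
  intro Y
  refine ⟨⟨Tmap ((6:ℝ)⁻¹ • Y), Omega2_7_le_Alt2 ⟨(6:ℝ)⁻¹ • Y, fun a b => rfl⟩⟩, ?_⟩
  funext l
  show piMap (Tmap ((6:ℝ)⁻¹ • Y)) l = Y l
  rw [pi_T]
  rw [Pi.smul_apply, smul_eq_mul]
  field_simp

lemma Omega2_14_eq_map : Omega2_14 = Submodule.map Alt2.subtype (LinearMap.ker piA) := by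
  have h1 : LinearMap.ker piA = Submodule.comap Alt2.subtype (LinearMap.ker piMap) := by
    rw [piA, LinearMap.ker_comp]
  rw [h1, Submodule.map_comap_subtype]
  ext β
  constructor
  · rintro ⟨h1, h2⟩
    exact ⟨h1, by funext k; exact h2 k⟩
  · rintro ⟨h1, h2⟩
    exact ⟨h1, fun k => congrFun h2 k⟩

set_option synthInstance.maxHeartbeats 1000000 in
lemma finrank_Omega2_14 : Module.finrank ℝ Omega2_14 = 14 := by
  have hmap : Module.finrank ℝ Omega2_14 = Module.finrank ℝ (LinearMap.ker piA) := by
    rw [Omega2_14_eq_map]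
    exact ((Submodule.equivMapOfInjective Alt2.subtype Subtype.val_injective
      (LinearMap.ker piA)).finrank_eq).symm
  have hrn := LinearMap.finrank_range_add_finrank_ker piA
  have hr : Module.finrank ℝ (LinearMap.range piA) = 7 := by
    rw [LinearMap.range_eq_top.mpr piA_surj, finrank_top, Module.finrank_pi, Fintype.card_fin]
  rw [hr, finrank_Alt2] at hrn
  omega

lemma inf_eq_bot : Omega2_7 ⊓ Omega2_14 = ⊥ := by
  rw [eq_bot_iff]
  rintro β ⟨⟨X, hX⟩, h14⟩
  have hβ : β = Tmap X := by funext a b; exact hX a b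
  have hX0 : X = 0 := by
    apply Tmap_inj
    rw [map_zero, ← hβ]
    funext a b
    show β a b = 0
    have hz : ∀ l, (6:ℝ) * X l = 0 := by
      intro l
      rw [← pi_T X l, ← hβ]
      exact h14.2 l
    have hX' : ∀ l, X l = 0 := fun l => by
      have := hz l; nlinarith [this]
    rw [hX a b]
    simp [hX']
  rw [Submodule.mem_bot, hβ, hX0, map_zero]

/-- The G₂-decomposition of 2-forms on `ℝ⁷`: in the 21-dimensional space of antisymmetric
2-tensors, `Ω²₇` has dimension 7, `Ω²₁₄` has dimension 14, and the whole space is their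
internal direct sum. -/
theorem two_forms_dimension_decomposition :
    Module.finrank ℝ Alt2 = 21 ∧
    Module.finrank ℝ Omega2_7 = 7 ∧
    Module.finrank ℝ Omega2_14 = 14 ∧
    Omega2_7 ⊔ Omega2_14 = Alt2 ∧
    Omega2_7 ⊓ Omega2_14 = ⊥ := by
  refine ⟨finrank_Alt2, finrank_Omega2_7, finrank_Omega2_14, ?_, inf_eq_bot⟩
  have hsum := Submodule.finrank_sup_add_finrank_inf_eq Omega2_7 Omega2_14
  rw [inf_eq_bot, finrank_bot, finrank_Omega2_7, finrank_Omega2_14, add_zero] at hsum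
  refine Submodule.eq_of_le_of_finrank_le (sup_le Omega2_7_le_Alt2 Omega2_14_le_Alt2) ?_
  rw [finrank_Alt2, hsum]
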